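/- Let Ω ⊂ ℝ^n be a bounded open set containing B_r(0) that is star-shaped with respect to the ball B_r(0). Then for every ε with 0 < ε < ε₀ (for some ε₀ > 0 depending on Ω) and every 0 < a < r, one has Ω ⊂⊂ ∩_{|z| ≤ aε} ((1+ε)Ω + z). -/

import Mathlib

open Metric

/-- `Ω` is star-shaped with respect to the ball `B_r(0)`: for every `y ∈ B_r(0)` and
`x ∈ Ω`, the segment `[y,x]` lies in `Ω`. -/
def StarShapedWrtBall (n : ℕ) (r : ℝ) (Ω : Set (EuclideanSpace ℝ (Fin n))) : Prop :=
  ∀ y ∈ ball (0 : EuclideanSpace ℝ (Fin n)) r, ∀ x ∈ Ω, segment ℝ y x ⊆ Ω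

/-- If a bounded open set `Ω ⊇ B_r(0)` is star-shaped with respect to `B_r(0)`, then
there is `ε₀ > 0` such that for every `0 < ε < ε₀` and `0 < a < r`,
`Ω ⊂⊂ ∩_{|z| ≤ aε} ((1+ε)Ω + z)` (compact containment). -/
theorem starShaped_dilation_containment (n : ℕ) (r : ℝ) (hr : 0 < r)
    (Ω : Set (EuclideanSpace ℝ (Fin n)))
    (hopen : IsOpen Ω) (hbdd : Bornology.IsBounded Ω)
    (hball : ball (0 : EuclideanSpace ℝ (Fin n)) r ⊆ Ω)
    (hstar : StarShapedWrtBall n r Ω) :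
    ∃ ε₀ > 0, ∀ ε : ℝ, 0 < ε → ε < ε₀ → ∀ a : ℝ, 0 < a → a < r →
      IsCompact (closure Ω) ∧
        closure Ω ⊆
          ⋂ z ∈ closedBall (0 : EuclideanSpace ℝ (Fin n)) (a * ε),
            (fun x => (1 + ε) • x + z) '' Ω := by
  -- Key: for x in closure Ω, y in B_r(0), t ∈ [0,1), the point t•x + (1-t)•y ∈ Ω.
  have key : ∀ x ∈ closure Ω, ∀ y ∈ ball (0 : EuclideanSpace ℝ (Fin n)) r,
      ∀ t : ℝ, 0 ≤ t → t < 1 → t • x + (1 - t) • y ∈ Ω := by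
    intro x hx y hy t ht0 ht1
    rcases eq_or_lt_of_le ht0 with h0 | h0
    · have : t • x + (1 - t) • y = y := by rw [← h0]; simp
      rw [this]; exact hball hy
    · have hyr : ‖y‖ < r := by simpa [mem_ball, dist_eq_norm] using hy
      have ht1' : (0:ℝ) < 1 - t := by linarith
      have htne : t ≠ 0 := ne_of_gt h0
      have ht1ne : (1:ℝ) - t ≠ 0 := ne_of_gt ht1'
      have hδ : 0 < (1 - t) * (r - ‖y‖) / t := div_pos (mul_pos ht1' (by linarith)) h0
      obtain ⟨x', hx'Ω, hx'⟩ := Metric.mem_closure_iff.mp hx _ hδ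
      set y' : EuclideanSpace ℝ (Fin n) := y + (t / (1 - t)) • (x - x') with hy'def
      have hy'r : y' ∈ ball (0 : EuclideanSpace ℝ (Fin n)) r := by
        rw [mem_ball, dist_eq_norm, sub_zero]
        have h1 : ‖y'‖ ≤ ‖y‖ + (t / (1 - t)) * ‖x - x'‖ := by
          calc ‖y'‖ ≤ ‖y‖ + ‖(t / (1 - t)) • (x - x')‖ := norm_add_le _ _
          _ = ‖y‖ + |t / (1 - t)| * ‖x - x'‖ := by rw [norm_smul, Real.norm_eq_abs]
          _ = ‖y‖ + (t / (1 - t)) * ‖x - x'‖ := by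
              rw [abs_of_nonneg (div_nonneg ht0 ht1'.le)]
        have h2 : ‖x - x'‖ < (1 - t) * (r - ‖y‖) / t := by
          rwa [← dist_eq_norm]
        have h3 : (t / (1 - t)) * ‖x - x'‖ < r - ‖y‖ := by
          have := mul_lt_mul_of_pos_left h2 (div_pos h0 ht1')
          calc (t / (1 - t)) * ‖x - x'‖
              < (t / (1 - t)) * ((1 - t) * (r - ‖y‖) / t) := this
            _ = r - ‖y‖ := by field_simp
        linarith
      have hseg : t • x + (1 - t) • y ∈ segment ℝ y' x' := by
        refine ⟨1 - t, t, by linarith, ht0, by ring, ?_⟩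
        rw [hy'def]
        match_scalars <;> field_simp <;> ring
      exact hstar y' hy'r x' hx'Ω hseg
  refine ⟨1, one_pos, fun ε hε hε1 a ha har => ⟨?_, ?_⟩⟩
  · exact hbdd.isCompact_closure
  · intro x hx
    simp only [Set.mem_iInter]
    intro z hz
    have hε' : (0 : ℝ) < 1 + ε := by linarith
    have hεne : ε ≠ 0 := ne_of_gt hε
    have hε'ne : (1:ℝ) + ε ≠ 0 := ne_of_gt hε'
    set y : EuclideanSpace ℝ (Fin n) := -(ε⁻¹ • z) with hydef
    have hyball : y ∈ ball (0 : EuclideanSpace ℝ (Fin n)) r := by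
      rw [mem_ball, dist_eq_norm, sub_zero, hydef, norm_neg, norm_smul, Real.norm_eq_abs,
        abs_of_nonneg (by positivity)]
      have hzn : ‖z‖ ≤ a * ε := by simpa [dist_eq_norm] using hz
      have h4 : ε⁻¹ * ‖z‖ ≤ a := by
        rw [inv_mul_le_iff₀ hε, mul_comm]; exact hzn
      linarith
    set t : ℝ := (1 + ε)⁻¹ with htdef
    have ht0 : 0 ≤ t := by positivity
    have ht1 : t < 1 := by
      rw [htdef, inv_lt_one_iff₀]; right; linarith
    refine ⟨t • x + (1 - t) • y, key x hx y hyball t ht0 ht1, ?_⟩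
    show (1 + ε) • (t • x + (1 - t) • y) + z = x
    rw [htdef, hydef]
    match_scalars <;> field_simp <;> ring
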